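/- Let x* ≥ 0 be a KKT point of min_{x≥0} (1/2)x^T Q x + z^T x with Q symmetric positive definite, and suppose a coordinate i is perturbed: x = x* + ε e_i with ε > -x*_i, ε ≠ 0. After one PQP multiplicative update x'_i = x_i (N_i x + z_i^-)/(P_i x + z_i^+) with Q = P - N (P = (Q)_+ + diag(γ), N = (-Q)_+ + diag(γ)), z = z^+ - z^- (z^+ = (z)_+ + φ, z^- = (-z)_+ + φ), the error ratio satisfies |x'_i - x*_i| / |x_i - x*_i| = |N_i x* + ε γ_i + z_i^- - x*_i Q_{ii}| / (P_i x* + ε Q_{ii} + ε γ_i + z_i^+), and this ratio is strictly less than 1 whenever P_i x* + N_i x* + 2εγ_i + εQ_{ii} + z_i^+ + z_i^- - x*_i Q_{ii} > 0. -/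

import Mathlib

open Matrix

/-- One PQP multiplicative update, started from a one-coordinate perturbation `x = x* + ε eᵢ`
of a KKT point `x*`, has error ratio
`|x'ᵢ - x*ᵢ|/|xᵢ - x*ᵢ| = |Nᵢx* + εγᵢ + z⁻ᵢ - x*ᵢ Qᵢᵢ| / (Pᵢx* + εQᵢᵢ + εγᵢ + z⁺ᵢ)`,
which is strictly less than `1` whenever
`Pᵢx* + Nᵢx* + 2εγᵢ + εQᵢᵢ + z⁺ᵢ + z⁻ᵢ - x*ᵢQᵢᵢ > 0`. -/
theorem stmt16 {n : ℕ} (Q : Matrix (Fin n) (Fin n) ℝ) (hQ : Q.PosDef)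
    (z γ φ xstar : Fin n → ℝ) (hγ : ∀ i, 0 ≤ γ i) (hφ : ∀ i, 0 ≤ φ i)
    (hx : ∀ i, 0 ≤ xstar i)
    (hkkt1 : ∀ i, xstar i * (Q.mulVec xstar + z) i = 0)
    (hkkt2 : ∀ i, 0 ≤ (Q.mulVec xstar + z) i)
    (i : Fin n) (ε : ℝ) (hε : ε ≠ 0) (hεl : -xstar i < ε) :
    let P : Matrix (Fin n) (Fin n) ℝ :=
      Matrix.of (fun u v => max (Q u v) 0) + Matrix.diagonal γ
    let N : Matrix (Fin n) (Fin n) ℝ :=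
      Matrix.of (fun u v => max (-Q u v) 0) + Matrix.diagonal γ
    let zp : Fin n → ℝ := fun u => max (z u) 0 + φ u
    let zm : Fin n → ℝ := fun u => max (-z u) 0 + φ u
    let x : Fin n → ℝ := xstar + ε • (Pi.single i 1 : Fin n → ℝ)
    let x' : ℝ := x i * (N.mulVec x i + zm i) / (P.mulVec x i + zp i)
    (|x' - xstar i| / |x i - xstar i| =
        |N.mulVec xstar i + ε * γ i + zm i - xstar i * Q i i| /
          (P.mulVec xstar i + ε * Q i i + ε * γ i + zp i)) ∧
    (0 < P.mulVec xstar i + N.mulVec xstar i + 2 * ε * γ i + ε * Q i i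
          + zp i + zm i - xstar i * Q i i →
      |x' - xstar i| / |x i - xstar i| < 1) := by
  intro P N zp zm x x'
  have hQii : 0 < Q i i := by
    have h1 : (Pi.single i 1 : Fin n → ℝ) ≠ 0 := by
      intro h
      have := congrFun h i
      simp at this
    have := hQ.diag_pos (i := i)
    simpa using this
  have hxi : x i = xstar i + ε := by
    simp [x]
  have hPii : P i i = Q i i + γ i := by
    simp [P, Matrix.diagonal_apply_eq, max_eq_left hQii.le]
  have hNii : N i i = γ i := by
    simp [N, Matrix.diagonal_apply_eq, max_eq_right (neg_nonpos.mpr hQii.le)]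
  have hPx : P.mulVec x i = P.mulVec xstar i + ε * (Q i i + γ i) := by
    simp only [x, Matrix.mulVec_add, Matrix.mulVec_smul, Pi.add_apply, Pi.smul_apply,
      Matrix.mulVec_single, smul_eq_mul, mul_one]
    simp [hPii]
  have hNx : N.mulVec x i = N.mulVec xstar i + ε * γ i := by
    simp only [x, Matrix.mulVec_add, Matrix.mulVec_smul, Pi.add_apply, Pi.smul_apply,
      Matrix.mulVec_single, smul_eq_mul, mul_one]
    simp [hNii]
  set A := P.mulVec xstar i with hA
  set B := N.mulVec xstar i with hB
  -- key identity: A + zp i = B + zm i + w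
  set w := (Q.mulVec xstar + z) i with hw
  have hkey : A + zp i = B + zm i + w := by
    have hPN : P - N = Q := by
      ext u v
      simp only [P, N, Matrix.sub_apply, Matrix.add_apply, Matrix.of_apply]
      rcases le_total (Q u v) 0 with h | h
      · rw [max_eq_right h, max_eq_left (by linarith)]; ring
      · rw [max_eq_left h, max_eq_right (by linarith)]; ring
    have h1 : A - B = Q.mulVec xstar i := by
      rw [hA, hB, ← Pi.sub_apply, ← Matrix.sub_mulVec, hPN]
    have h2 : zp i - zm i = z i := by
      simp only [zp, zm]
      rcases le_total (z i) 0 with h | h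
      · rw [max_eq_right h, max_eq_left (by linarith)]; ring
      · rw [max_eq_left h, max_eq_right (by linarith)]; ring
    simp only [hw, Pi.add_apply]
    linarith
  have hxw : xstar i * w = 0 := hkkt1 i
  have hw0 : 0 ≤ w := hkkt2 i
  have hzp : 0 ≤ zp i := add_nonneg (le_max_right _ _) (hφ i)
  have hzm : 0 ≤ zm i := add_nonneg (le_max_right _ _) (hφ i)
  -- lower bound for A
  have hAlb : (Q i i + γ i) * xstar i ≤ A := by
    rw [hA]
    have : A = ∑ v, P i v * xstar v := rfl
    rw [hA] at this
    show (Q i i + γ i) * xstar i ≤ ∑ v, P i v * xstar v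
    have hterm : ∀ v ∈ Finset.univ, 0 ≤ P i v * xstar v := by
      intro v _
      apply mul_nonneg _ (hx v)
      simp only [P, Matrix.add_apply, Matrix.of_apply]
      have : 0 ≤ Matrix.diagonal γ i v := by
        rcases eq_or_ne i v with h | h
        · simp [h, hγ v]
        · simp [Matrix.diagonal_apply_ne _ h]
      have := le_max_right (Q i v) 0
      linarith
    calc (Q i i + γ i) * xstar i = P i i * xstar i := by rw [hPii]
      _ ≤ ∑ v, P i v * xstar v := Finset.single_le_sum hterm (Finset.mem_univ i)
  have hxe : 0 < xstar i + ε := by linarith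
  set D := A + ε * Q i i + ε * γ i + zp i with hD
  have hDpos : 0 < D := by nlinarith [hx i, hγ i, hQii, hxe]
  set num := B + ε * γ i + zm i - xstar i * Q i i with hnum
  have hx' : x' = (xstar i + ε) * (B + ε * γ i + zm i) / D := by
    simp only [x']
    rw [hxi, hNx, hPx, hD]
    ring_nf
  have hnum' : (xstar i + ε) * (B + ε * γ i + zm i) - xstar i * D = ε * num := by
    rw [hD, hnum]
    linear_combination (-(xstar i)) * hkey - hxw
  have hdiff : x' - xstar i = ε * num / D := by
    rw [hx', ← hnum', sub_div, mul_div_cancel_right₀ _ hDpos.ne']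
  have habs : |x' - xstar i| = |ε| * |num| / D := by
    rw [hdiff, abs_div, abs_mul, abs_of_pos hDpos]
  have hxdiff : |x i - xstar i| = |ε| := by
    rw [hxi, add_sub_cancel_left]
  have hεabs : 0 < |ε| := abs_pos.mpr hε
  have hratio : |x' - xstar i| / |x i - xstar i| = |num| / D := by
    rw [habs, hxdiff, mul_div_assoc, mul_div_cancel_left₀ _ hεabs.ne']
  constructor
  · exact hratio
  · intro hcond
    rw [hratio]
    rw [div_lt_one hDpos]
    have h1 : D + num > 0 := by
      have heq : P.mulVec xstar i + N.mulVec xstar i + 2 * ε * γ i + ε * Q i i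
          + zp i + zm i - xstar i * Q i i = D + num := by rw [hD, hnum, hA, hB]; ring
      linarith [heq, hcond]
    have h2 : D - num > 0 := by
      have heq : D - num = w + (xstar i + ε) * Q i i := by
        rw [hD, hnum]; linear_combination hkey
      rw [heq]
      nlinarith [hw0, hxe, hQii]
    exact abs_lt.mpr ⟨by linarith, by linarith⟩
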